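/- Let G be a finite simple graph, let P be a partition of V(G) into sets each of which is a module of G, and for each class M ∈ P choose a representative vertex v_M ∈ M; let V' be the set of chosen representatives. Let w: V(G) → ℕ⁺ be a weight function and define w*: V' → ℕ⁺ by w*(v_M) = χ_w(G(M)), the weighted chromatic number of the subgraph induced by M with the restricted weights. Then χ_w(G) = χ_{w*}(G(V')). -/

import Mathlib

/-- `G` has a weighted coloring using colors from `{1,…,k}`: each vertex `v` gets a set
`c v ⊆ {1,…,k}` of `w v` colors, and adjacent vertices get disjoint color sets. -/
def SimpleGraph.HasWeightedColoring {V : Type*} (G : SimpleGraph V) (w : V → ℕ) (k : ℕ) : Prop :=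
  ∃ c : V → Finset ℕ, (∀ v, c v ⊆ Finset.Icc 1 k) ∧ (∀ v, (c v).card = w v) ∧
    ∀ u v, G.Adj u v → Disjoint (c u) (c v)

/-- The weighted chromatic number `χ_w(G)`: the least `k` admitting a weighted coloring. -/
noncomputable def SimpleGraph.weightedChromaticNumber {V : Type*} (G : SimpleGraph V)
    (w : V → ℕ) : ℕ :=
  sInf {k | G.HasWeightedColoring w k}

/-- A set `M` is a module of a graph `G`: every vertex outside `M` is adjacent
to all vertices of `M` or to none of them. -/
def SimpleGraph.IsModuleSet {V : Type*} (G : SimpleGraph V) (M : Set V) : Prop :=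
  ∀ x ∉ M, (∀ v ∈ M, G.Adj x v) ∨ (∀ v ∈ M, ¬ G.Adj x v)


open Finset

lemma hasWC_exists {V : Type*} [Fintype V] (G : SimpleGraph V) (w : V → ℕ) :
    G.HasWeightedColoring w (∑ v, w v) := by
  classical
  obtain e := Fintype.equivFin V
  set f : V → ℕ := fun v => ∑ u ∈ Finset.univ.filter (fun u => e u < e v), w u with hf
  have hins : ∀ v : V, f v + w v = ∑ u ∈ insert v (Finset.univ.filter (fun u => e u < e v)), w u := by
    intro v
    rw [Finset.sum_insert (by simp), hf, Nat.add_comm]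
  refine ⟨fun v => Finset.Ioc (f v) (f v + w v), ?_, ?_, ?_⟩
  · intro v x hx
    rw [Finset.mem_Ioc] at hx
    rw [Finset.mem_Icc]
    refine ⟨by omega, ?_⟩
    calc x ≤ f v + w v := hx.2
      _ = _ := hins v
      _ ≤ ∑ u, w u := Finset.sum_le_sum_of_subset (Finset.subset_univ _)
  · intro v; rw [Nat.card_Ioc]; omega
  · have key : ∀ u v : V, e u < e v →
        Disjoint (Finset.Ioc (f u) (f u + w u)) (Finset.Ioc (f v) (f v + w v)) := by
      intro u v huv
      have hsub : insert u (Finset.univ.filter (fun x => e x < e u)) ⊆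
          Finset.univ.filter (fun x => e x < e v) := by
        intro x hx
        simp only [Finset.mem_insert, Finset.mem_filter, Finset.mem_univ, true_and] at hx ⊢
        rcases hx with rfl | hx
        · exact huv
        · exact hx.trans huv
      have hle : f u + w u ≤ f v := by
        rw [hins u]
        exact Finset.sum_le_sum_of_subset hsub
      rw [Finset.disjoint_left]
      intro a ha hb
      rw [Finset.mem_Ioc] at ha hb
      omega
    intro u v huv
    rcases lt_trichotomy (e u) (e v) with h | h | h
    · exact key u v h
    · exact absurd (e.injective h) (G.ne_of_adj huv)
    · exact (key v u h).symm

lemma image_disjoint_of_injOn {s t : Finset ℕ} {S : Set ℕ} {g : ℕ → ℕ}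
    (hg : Set.InjOn g S) (hs : ↑s ⊆ S) (ht : ↑t ⊆ S) (h : Disjoint s t) :
    Disjoint (s.image g) (t.image g) := by
  rw [Finset.disjoint_left] at h ⊢
  rintro a ha hb
  obtain ⟨x, hx, rfl⟩ := Finset.mem_image.mp ha
  obtain ⟨y, hy, hxy⟩ := Finset.mem_image.mp hb
  have := hg (hs hx) (ht hy) hxy.symm
  exact h hx (this ▸ hy)

lemma hasWC_of_subset {V : Type*} (G : SimpleGraph V) (w : V → ℕ) (S : Finset ℕ)
    (c : V → Finset ℕ) (hsub : ∀ v, c v ⊆ S) (hcard : ∀ v, (c v).card = w v)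
    (hdisj : ∀ u v, G.Adj u v → Disjoint (c u) (c v)) :
    G.HasWeightedColoring w S.card := by
  classical
  have hcard' : S.card = (Finset.Icc 1 S.card).card := by rw [Nat.card_Icc]; omega
  set eqv := Finset.equivOfCardEq hcard' with heqv
  set g : ℕ → ℕ := fun x => if h : x ∈ S then (eqv ⟨x, h⟩ : ℕ) else 0 with hg
  have hginj : Set.InjOn g ↑S := by
    intro x hx y hy hxy
    rw [Finset.mem_coe] at hx hy
    rw [hg] at hxy
    simp only [dif_pos hx, dif_pos hy] at hxy
    have := eqv.injective (Subtype.ext hxy)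
    exact congrArg Subtype.val this
  refine ⟨fun v => (c v).image g, ?_, ?_, ?_⟩
  · intro v y hy
    obtain ⟨x, hx, rfl⟩ := Finset.mem_image.mp hy
    have hxS : x ∈ S := hsub v hx
    simp only [hg, dif_pos hxS]
    exact (eqv ⟨x, hxS⟩).2
  · intro v
    rw [Finset.card_image_of_injOn (hginj.mono (by exact_mod_cast hsub v)), hcard]
  · intro u v huv
    exact image_disjoint_of_injOn hginj (by exact_mod_cast hsub u) (by exact_mod_cast hsub v)
      (hdisj u v huv)

/-- Let `P` be a partition of the vertex set of `G` into modules and let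
`V'` contain exactly one representative of each class of `P`. If `w*` assigns to each
representative of a class `M` the weighted chromatic number of `G(M)` (with weights
restricted from `w`), then `χ_w(G) = χ_{w*}(G(V'))`. -/
theorem weightedChromaticNumber_modular_contraction
    {V : Type*} [Fintype V] (G : SimpleGraph V) (w : V → ℕ) (hw : ∀ v, 0 < w v)
    (P : Set (Set V)) (hP : Setoid.IsPartition P)
    (hmod : ∀ M ∈ P, G.IsModuleSet M)
    (V' : Set V) (hrep : ∀ M ∈ P, ∃! v : V, v ∈ M ∩ V')
    (hV' : V' ⊆ ⋃ M ∈ P, M)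
    (wstar : V → ℕ)
    (hwstar : ∀ M ∈ P, ∀ v ∈ M ∩ V',
      wstar v = (G.induce M).weightedChromaticNumber (fun u => w u)) :
    G.weightedChromaticNumber w =
      (G.induce V').weightedChromaticNumber (fun v => wstar v) := by
  classical
  -- the class of each vertex
  choose cls hclsP hclsmem using fun u : V => (hP.2 u).exists
  have huniq : ∀ (u : V) (M : Set V), M ∈ P → u ∈ M → M = cls u :=
    fun u M hM hu => (hP.2 u).unique ⟨hM, hu⟩ ⟨hclsP u, hclsmem u⟩
  have hclseq : ∀ u x : V, x ∈ cls u → cls x = cls u :=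
    fun u x hx => (huniq x (cls u) (hclsP u) hx).symm
  -- the representative of each vertex's class
  choose rep hrepmem using fun u : V => (hrep (cls u) (hclsP u)).exists
  have hrepuniq : ∀ u x : V, x ∈ cls u ∩ V' → x = rep u :=
    fun u x hx => (hrep (cls u) (hclsP u)).unique hx (hrepmem u)
  -- adjacency between distinct modules is all-to-all
  have hadjall : ∀ u u' : V, G.Adj u u' → cls u ≠ cls u' →
      ∀ x ∈ cls u, ∀ y ∈ cls u', G.Adj x y := by
    intro u u' h hne x hx y hy
    have hu'x : u' ∉ cls u := fun hmem => hne (hclseq u u' hmem).symm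
    have h1 : G.Adj u' x := by
      rcases hmod (cls u) (hclsP u) u' hu'x with hall | hnone
      · exact hall x hx
      · exact absurd h.symm (hnone u (hclsmem u))
    have hxN : x ∉ cls u' := fun hmem => hne ((hclseq u x hx).symm.trans (hclseq u' x hmem))
    rcases hmod (cls u') (hclsP u') x hxN with hall | hnone
    · exact hall y hy
    · exact absurd h1.symm (hnone u' (hclsmem u'))
  set χ : Set V → ℕ := fun M => (G.induce M).weightedChromaticNumber (fun x => w ↑x) with hχ
  apply le_antisymm
  · -- χ_w(G) ≤ χ_{w*}(G(V'))
    haveI : Fintype ↥V' := Fintype.ofFinite _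
    obtain ⟨c', hc'1, hc'2, hc'3⟩ :
        (G.induce V').HasWeightedColoring (fun v => wstar ↑v)
          ((G.induce V').weightedChromaticNumber (fun v => wstar ↑v)) :=
      Nat.sInf_mem (s := {k | (G.induce V').HasWeightedColoring (fun v => wstar ↑v) k})
        ⟨_, hasWC_exists _ _⟩
    -- optimal colorings of each module, as functions on V
    have hDex : ∀ M : Set V, ∃ d : V → Finset ℕ, M ∈ P →
        (∀ x ∈ M, d x ⊆ Finset.Icc 1 (χ M)) ∧ (∀ x ∈ M, (d x).card = w x) ∧
        (∀ x ∈ M, ∀ y ∈ M, G.Adj x y → Disjoint (d x) (d y)) := by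
      intro M
      by_cases hM : M ∈ P
      · haveI : Fintype ↥M := Fintype.ofFinite _
        obtain ⟨d0, hd1, hd2, hd3⟩ :
            (G.induce M).HasWeightedColoring (fun x => w ↑x) (χ M) :=
          Nat.sInf_mem (s := {k | (G.induce M).HasWeightedColoring (fun x => w ↑x) k})
            ⟨_, hasWC_exists _ _⟩
        refine ⟨fun x => if h : x ∈ M then d0 ⟨x, h⟩ else ∅, fun _ => ⟨?_, ?_, ?_⟩⟩
        · intro x hx
          simp only [dif_pos hx]
          exact hd1 ⟨x, hx⟩
        · intro x hx
          simp only [dif_pos hx]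
          exact hd2 ⟨x, hx⟩
        · intro x hx y hy hxy
          simp only [dif_pos hx, dif_pos hy]
          exact hd3 ⟨x, hx⟩ ⟨y, hy⟩ hxy
      · exact ⟨fun _ => ∅, fun h => absurd h hM⟩
    choose D hD using hDex
    -- injections from the module palettes into representatives' color sets
    have hgex : ∀ M : Set V, ∃ g : ℕ → ℕ, M ∈ P →
        Set.InjOn g ↑(Finset.Icc 1 (χ M)) ∧
        ∀ (r : V) (hr1 : r ∈ M) (hr2 : r ∈ V'), ∀ x ∈ Finset.Icc 1 (χ M),
          g x ∈ c' ⟨r, hr2⟩ := by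
      intro M
      by_cases hM : M ∈ P
      · obtain ⟨r0, hr0, hr0u⟩ := hrep M hM
        have hcard : (Finset.Icc 1 (χ M)).card = (c' ⟨r0, hr0.2⟩).card := by
          have hws : wstar r0 = χ M := hwstar M hM r0 hr0
          rw [Nat.card_Icc, hc'2]
          show χ M + 1 - 1 = wstar r0
          rw [hws]
          omega
        set eqv := Finset.equivOfCardEq hcard with heqv
        refine ⟨fun x => if h : x ∈ Finset.Icc 1 (χ M) then (eqv ⟨x, h⟩ : ℕ) else 0,
          fun _ => ⟨?_, ?_⟩⟩
        · intro x hx y hy hxy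
          rw [Finset.mem_coe] at hx hy
          simp only [dif_pos hx, dif_pos hy] at hxy
          exact congrArg Subtype.val (eqv.injective (Subtype.ext hxy))
        · intro r hr1 hr2 x hx
          have hr : r = r0 := hr0u r ⟨hr1, hr2⟩
          subst hr
          simp only [dif_pos hx]
          exact (eqv ⟨x, hx⟩).2
      · exact ⟨fun _ => 0, fun h => absurd h hM⟩
    choose g hg using hgex
    apply Nat.sInf_le
    refine ⟨fun u => (D (cls u) u).image (g (cls u)), ?_, ?_, ?_⟩
    · intro u y hy
      obtain ⟨x, hx, rfl⟩ := Finset.mem_image.mp hy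
      have hxIcc : x ∈ Finset.Icc 1 (χ (cls u)) := (hD (cls u) (hclsP u)).1 u (hclsmem u) hx
      exact hc'1 _ ((hg (cls u) (hclsP u)).2 (rep u) (hrepmem u).1 (hrepmem u).2 x hxIcc)
    · intro u
      rw [Finset.card_image_of_injOn
        (((hg (cls u) (hclsP u)).1).mono
          (fun x hx => Finset.mem_coe.mpr ((hD (cls u) (hclsP u)).1 u (hclsmem u) hx)))]
      exact (hD (cls u) (hclsP u)).2.1 u (hclsmem u)
    · intro u u' hadj
      by_cases hsame : cls u' = cls u
      · show Disjoint ((D (cls u) u).image (g (cls u))) ((D (cls u') u').image (g (cls u')))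
        rw [hsame]
        have hu'mem : u' ∈ cls u := hsame ▸ hclsmem u'
        exact image_disjoint_of_injOn (hg (cls u) (hclsP u)).1
          (fun x hx => Finset.mem_coe.mpr ((hD (cls u) (hclsP u)).1 u (hclsmem u) hx))
          (fun x hx => Finset.mem_coe.mpr ((hD (cls u) (hclsP u)).1 u' hu'mem hx))
          ((hD (cls u) (hclsP u)).2.2 u (hclsmem u) u' hu'mem hadj)
      · have hadjrep : G.Adj (rep u) (rep u') :=
          hadjall u u' hadj (fun h => hsame h.symm) (rep u) (hrepmem u).1 (rep u') (hrepmem u').1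
        have hdisj := hc'3 ⟨rep u, (hrepmem u).2⟩ ⟨rep u', (hrepmem u').2⟩ hadjrep
        rw [Finset.disjoint_left]
        intro a ha hb
        have ha' : a ∈ c' ⟨rep u, (hrepmem u).2⟩ := by
          obtain ⟨x, hx, rfl⟩ := Finset.mem_image.mp ha
          exact (hg (cls u) (hclsP u)).2 (rep u) (hrepmem u).1 (hrepmem u).2 x
            ((hD (cls u) (hclsP u)).1 u (hclsmem u) hx)
        have hb' : a ∈ c' ⟨rep u', (hrepmem u').2⟩ := by
          obtain ⟨x, hx, rfl⟩ := Finset.mem_image.mp hb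
          exact (hg (cls u') (hclsP u')).2 (rep u') (hrepmem u').1 (hrepmem u').2 x
            ((hD (cls u') (hclsP u')).1 u' (hclsmem u') hx)
        exact Finset.disjoint_left.mp hdisj ha' hb'
  · -- χ_{w*}(G(V')) ≤ χ_w(G)
    obtain ⟨c, hc1, hc2, hc3⟩ :
        G.HasWeightedColoring w (G.weightedChromaticNumber w) :=
      Nat.sInf_mem (s := {k | G.HasWeightedColoring w k}) ⟨_, hasWC_exists G w⟩
    set n := G.weightedChromaticNumber w with hn
    set T : V → Finset ℕ := fun u => (Finset.univ.filter (fun x => x ∈ cls u)).biUnion c with hT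
    have hTsub : ∀ u, T u ⊆ Finset.Icc 1 n := by
      intro u a ha
      obtain ⟨x, hx, hax⟩ := Finset.mem_biUnion.mp ha
      exact hc1 x hax
    have hχle : ∀ u : V, χ (cls u) ≤ (T u).card := by
      intro u
      apply Nat.sInf_le
      exact hasWC_of_subset _ _ (T u) (fun x => c ↑x)
        (fun x a hax => Finset.mem_biUnion.mpr
          ⟨↑x, Finset.mem_filter.mpr ⟨Finset.mem_univ _, x.2⟩, hax⟩)
        (fun x => hc2 ↑x)
        (fun x y hxy => hc3 ↑x ↑y hxy)
    have hex : ∀ v : ↥V', ∃ t : Finset ℕ, t ⊆ T ↑v ∧ t.card = wstar ↑v := by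
      intro v
      apply Finset.exists_subset_card_eq
      rw [hwstar (cls ↑v) (hclsP ↑v) ↑v ⟨hclsmem ↑v, v.2⟩]
      exact hχle ↑v
    choose t ht1 ht2 using hex
    apply Nat.sInf_le
    refine ⟨t, fun v => (ht1 v).trans (hTsub ↑v), ht2, ?_⟩
    intro v v' hadj
    have hadj' : G.Adj ↑v ↑v' := hadj
    have hne : cls (↑v : V) ≠ cls (↑v' : V) := by
      intro h
      have h1 : (↑v : V) = rep ↑v := hrepuniq ↑v ↑v ⟨hclsmem ↑v, v.2⟩
      have h2 : (↑v' : V) = rep ↑v := hrepuniq ↑v ↑v' ⟨by rw [h]; exact hclsmem ↑v', v'.2⟩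
      exact G.loopless.irrefl ↑v (by rw [show (↑v : V) = ↑v' from h1.trans h2.symm] at hadj' ⊢; exact hadj')
    have hTdisj : Disjoint (T ↑v) (T ↑v') := by
      rw [Finset.disjoint_left]
      intro a ha hb
      obtain ⟨x, hx, hax⟩ := Finset.mem_biUnion.mp ha
      obtain ⟨y, hy, hay⟩ := Finset.mem_biUnion.mp hb
      simp only [Finset.mem_filter, Finset.mem_univ, true_and] at hx hy
      exact Finset.disjoint_left.mp (hc3 x y (hadjall ↑v ↑v' hadj' hne x hx y hy)) hax hay
    exact hTdisj.mono (ht1 v) (ht1 v')
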